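/- Let A be an n×n real Hurwitz matrix, τ > 0, Q an n×n real symmetric positive-semidefinite matrix, and R a symmetric positive-semidefinite matrix with R·R = 2Q (so R = √(2Q)). Let B = (I − τA)⁻¹, M = [[A, R], [0, −τ⁻¹I]], D = [[0, 0], [0, (2τ²)⁻¹I]]. If Σ = [[C, Σxη], [Σηx, Σηη]] is a symmetric 2n×2n real matrix satisfying M·Σ + Σ·Mᵀ + 2D = 0, then the top-left block C = Σxx satisfies the generalized fluctuation–dissipation relation 0 = A·C + C·Aᵀ + Q·Bᵀ + B·Q. -/

import Mathlib

open Matrix Polynomial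

/-- Generalized fluctuation–dissipation relation: if `A` is Hurwitz, `τ > 0`, `Q` is symmetric
positive semidefinite, `R` is symmetric positive semidefinite with `R * R = 2 • Q`
(so `R = √(2Q)`), `B = (I - τ • A)⁻¹`, and the symmetric matrix
`Σ = [[C, Σxη], [Σηx, Σηη]]` satisfies the block Lyapunov equation
`M * Σ + Σ * Mᵀ + 2 • D = 0` with `M = [[A, R], [0, -τ⁻¹ • I]]` and
`D = [[0,0],[0,(2τ²)⁻¹ • I]]`, then `0 = A * C + C * Aᵀ + Q * Bᵀ + B * Q`. -/
lemma charpoly_eval_aux {n : ℕ} (M : Matrix (Fin n) (Fin n) ℂ) (t : ℂ) :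
    (M.charpoly).eval t = (t • (1 : Matrix (Fin n) (Fin n) ℂ) - M).det := by
  have : (M.charpoly).eval t = ((charmatrix M).map (evalRingHom t)).det := by
    rw [Matrix.charpoly, ← coe_evalRingHom, RingHom.map_det]; rfl
  rw [this]
  congr 1
  ext i j
  simp [charmatrix_apply, Matrix.diagonal_apply, Matrix.smul_apply, Matrix.one_apply]
  split <;> simp

theorem generalized_fluctuation_dissipation {n : ℕ} (A Q R : Matrix (Fin n) (Fin n) ℝ) (τ : ℝ)
    (hτ : 0 < τ)
    (hA : ∀ μ : ℂ, ((A.map (Complex.ofReal)).charpoly).IsRoot μ → μ.re < 0)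
    (hQ : Q.PosSemidef) (hR : R.PosSemidef) (hRQ : R * R = (2 : ℝ) • Q)
    (C Sxη Sηx Sηη : Matrix (Fin n) (Fin n) ℝ)
    (hsymm : (fromBlocks C Sxη Sηx Sηη)ᵀ = fromBlocks C Sxη Sηx Sηη)
    (hlyap :
      fromBlocks A R 0 (-τ⁻¹ • 1) * fromBlocks C Sxη Sηx Sηη
        + fromBlocks C Sxη Sηx Sηη * (fromBlocks A R 0 (-τ⁻¹ • 1))ᵀ
        + (2 : ℝ) • fromBlocks 0 0 0 ((2 * τ ^ 2)⁻¹ • 1) = 0) :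
    (0 : Matrix (Fin n) (Fin n) ℝ) =
      A * C + C * Aᵀ + Q * ((1 - τ • A)⁻¹)ᵀ + (1 - τ • A)⁻¹ * Q := by
  have hτ0 : τ ≠ 0 := hτ.ne'
  -- symmetry of R
  have hRsym : Rᵀ = R := by
    have := hR.isHermitian.eq
    simpa [Matrix.conjTranspose_eq_transpose_of_trivial] using this
  -- invertibility of 1 - τ • A
  have hdet : IsUnit (1 - τ • A).det := by
    rw [isUnit_iff_ne_zero]
    intro h0
    have hmap : ((1 - τ • A).map (Complex.ofReal)).det = 0 := by
      have h := (RingHom.map_det Complex.ofRealHom (1 - τ • A)).symm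
      rw [RingHom.mapMatrix_apply] at h
      have h2 : ((1 - τ • A).map (Complex.ofReal)).det = Complex.ofRealHom (1 - τ • A).det := by
        rw [← h]; rfl
      rw [h2, h0]; simp
    have heq : ((1 - τ • A).map (Complex.ofReal)) =
        1 - (τ : ℂ) • (A.map Complex.ofReal) := by
      ext i j
      simp [Matrix.map_apply, Matrix.one_apply, Matrix.sub_apply, Matrix.smul_apply]
      split <;> simp
    have hroot : ((A.map Complex.ofReal).charpoly).IsRoot ((τ : ℂ)⁻¹) := by
      have hsm : (τ : ℂ)⁻¹ • (1 - (τ : ℂ) • (A.map Complex.ofReal)) =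
          (τ : ℂ)⁻¹ • (1 : Matrix (Fin n) (Fin n) ℂ) - A.map Complex.ofReal := by
        rw [smul_sub, smul_smul, inv_mul_cancel₀ (by exact_mod_cast hτ0), one_smul]
      have hd : ((τ : ℂ)⁻¹ • (1 : Matrix (Fin n) (Fin n) ℂ) - A.map Complex.ofReal).det = 0 := by
        rw [← hsm, Matrix.det_smul, ← heq, hmap, mul_zero]
      rw [Polynomial.IsRoot, charpoly_eval_aux, hd]
    have hlt := hA _ hroot
    have hre : ((τ : ℂ)⁻¹).re = τ⁻¹ := by
      rw [← Complex.ofReal_inv, Complex.ofReal_re]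
    rw [hre] at hlt
    exact absurd hlt (not_lt.mpr (le_of_lt (inv_pos.mpr hτ)))
  set B := (1 - τ • A)⁻¹ with hBdef
  have hB : B * (1 - τ • A) = 1 := Matrix.nonsing_inv_mul _ hdet
  -- block equations
  rw [Matrix.fromBlocks_transpose] at hsymm hlyap
  rw [Matrix.fromBlocks_multiply, Matrix.fromBlocks_multiply] at hlyap
  have hzero : (0 : Matrix (Fin n ⊕ Fin n) (Fin n ⊕ Fin n) ℝ) = fromBlocks 0 0 0 0 := by
    simp
  rw [Matrix.fromBlocks_smul, Matrix.fromBlocks_add, Matrix.fromBlocks_add, hzero,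
    Matrix.fromBlocks_inj] at hlyap
  rw [Matrix.fromBlocks_inj] at hsymm
  obtain ⟨hCsym, hSηxT, hSxηT, hSηηT⟩ := hsymm
  obtain ⟨e11, e12, e21, e22⟩ := hlyap
  -- Sηη = (2τ)⁻¹ • 1
  have hSηη : Sηη = (2 * τ)⁻¹ • 1 := by
    simp only [Matrix.zero_mul, Matrix.mul_zero, add_zero, zero_add, Matrix.transpose_smul,
      Matrix.transpose_zero, Matrix.transpose_one, Matrix.transpose_neg, neg_smul,
      Matrix.neg_mul, Matrix.mul_neg, Matrix.smul_mul, Matrix.mul_smul, Matrix.one_mul,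
      Matrix.mul_one, smul_smul, smul_zero] at e22
    ext i j
    have h := congrFun (congrFun e22 i) j
    simp only [Matrix.add_apply, Matrix.neg_apply, Matrix.smul_apply, Matrix.one_apply,
      Matrix.zero_apply, smul_eq_mul] at h ⊢
    by_cases hij : i = j
    · simp only [hij, if_pos rfl, ↓reduceIte, mul_one] at h ⊢
      norm_num at h
      have h1 : τ⁻¹ * Sηη j j = (τ ^ 2)⁻¹ * (1 / 2) := by linarith
      have : Sηη j j = τ * (τ⁻¹ * Sηη j j) := by
        rw [← mul_assoc, mul_inv_cancel₀ hτ0, one_mul]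
      rw [this, h1]
      field_simp
    · simp only [if_neg hij, mul_zero, add_zero] at h ⊢
      have h1 : τ⁻¹ * Sηη i j = 0 := by linarith
      rcases mul_eq_zero.mp h1 with h2 | h2
      · exact absurd h2 (inv_ne_zero hτ0)
      · exact h2
  -- (1 - τ•A) * Sxη = 2⁻¹ • R
  have hSx : (1 - τ • A) * Sxη = (2 : ℝ)⁻¹ • R := by
    simp only [Matrix.zero_mul, Matrix.mul_zero, Matrix.transpose_zero, add_zero, zero_add,
      Matrix.transpose_smul, Matrix.transpose_one, Matrix.transpose_neg, neg_smul,
      Matrix.mul_neg, Matrix.mul_smul, Matrix.mul_one, hSηη, smul_smul, smul_zero] at e12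
    -- e12 : A * Sxη + (2*τ)⁻¹ • R + -(τ⁻¹ • Sxη) = 0 (up to assoc)
    have h' : A * Sxη + ((2 * τ)⁻¹ • R + -(τ⁻¹ • Sxη)) = 0 := by
      rw [← add_assoc]; exact e12
    have hAS : A * Sxη = τ⁻¹ • Sxη - (2 * τ)⁻¹ • R := by
      have h2 := add_eq_zero_iff_eq_neg.mp h'
      rw [h2]; abel
    rw [Matrix.sub_mul, Matrix.one_mul, Matrix.smul_mul, hAS, smul_sub, smul_smul, smul_smul,
      mul_inv_cancel₀ hτ0]
    have ht : τ * (2 * τ)⁻¹ = 2⁻¹ := by field_simp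
    rw [ht, one_smul]
    abel
  -- Sxη = 2⁻¹ • (B * R)
  have hSxη : Sxη = (2 : ℝ)⁻¹ • (B * R) := by
    calc Sxη = (B * (1 - τ • A)) * Sxη := by rw [hB, Matrix.one_mul]
      _ = B * ((1 - τ • A) * Sxη) := by rw [Matrix.mul_assoc]
      _ = B * ((2 : ℝ)⁻¹ • R) := by rw [hSx]
      _ = (2 : ℝ)⁻¹ • (B * R) := by rw [Matrix.mul_smul]
  have hSηx : Sηx = (2 : ℝ)⁻¹ • (R * Bᵀ) := by
    rw [← hSxηT, hSxη, Matrix.transpose_smul, Matrix.transpose_mul, hRsym]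
  -- finish
  have hRS : R * Sηx = Q * Bᵀ := by
    rw [hSηx, Matrix.mul_smul, ← Matrix.mul_assoc, hRQ, Matrix.smul_mul, smul_smul]
    norm_num
  have hSR : Sxη * Rᵀ = B * Q := by
    rw [hRsym, hSxη, Matrix.smul_mul, Matrix.mul_assoc, hRQ, Matrix.mul_smul, smul_smul]
    norm_num
  simp only [Matrix.mul_zero, Matrix.zero_mul, add_zero, zero_add, smul_zero] at e11
  rw [hRS, hSR] at e11
  calc (0 : Matrix (Fin n) (Fin n) ℝ)
      = A * C + Q * Bᵀ + (C * Aᵀ + B * Q) := e11.symm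
    _ = A * C + C * Aᵀ + Q * Bᵀ + B * Q := by abel
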